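/- Any finite sum ∑_{t=1}^k J_{i_t,α_t,ε_t} of ideals generated by pure powers of single variables has the form J_{β,δ} for some β ∈ (ℝ≥0 ∪ {∞})^d and δ ∈ {0,1}^d, hence is m-irreducible. -/

import Mathlib

open scoped NNReal ENNReal

/-- The semigroup ring `R = A[ℝ≥0 ^ d]`. -/
abbrev SemiRng (A : Type*) [CommRing A] (d : ℕ) : Type _ :=
  AddMonoidAlgebra A (Fin d → ℝ≥0)

/-- The monomial `X^r` of `A[ℝ≥0 ^ d]`. -/
noncomputable def mono (A : Type*) [CommRing A] {d : ℕ} (r : Fin d → ℝ≥0) : SemiRng A d :=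
  AddMonoidAlgebra.single r 1

/-- An ideal of `A[ℝ≥0 ^ d]` is a monomial ideal if it is generated by a set of monomials. -/
def IsMonomialIdeal {A : Type*} [CommRing A] {d : ℕ} (I : Ideal (SemiRng A d)) : Prop :=
  ∃ E : Set (Fin d → ℝ≥0), I = Ideal.span (mono A '' E)

/-- The set of (exponent vectors of) monomials contained in an ideal. -/
def monSet (A : Type*) [CommRing A] {d : ℕ} (I : Ideal (SemiRng A d)) :
    Set (Fin d → ℝ≥0) :=
  {r | mono A r ∈ I}

/-- `geq e r a` means `r ≥_e a`: `r ≥ a` if `e = 0` (false), `r > a` if `e = 1` (true);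
no finite `r` satisfies `r ≥_e ∞`. -/
def geq (e : Bool) (r : ℝ≥0) (a : ℝ≥0∞) : Prop :=
  if e then a < (r : ℝ≥0∞) else a ≤ (r : ℝ≥0∞)

/-- The ideal `J_{i,a,e}` generated by the pure powers `X_i^r` with `r ≥_e a`. -/
noncomputable def Jsingle (A : Type*) [CommRing A] {d : ℕ} (i : Fin d) (a : ℝ≥0∞)
    (e : Bool) : Ideal (SemiRng A d) :=
  Ideal.span {f | ∃ r : ℝ≥0, geq e r a ∧ f = mono A (Pi.single i r)}

/-- The ideal `J_{a,e}` generated by all pure powers `X_i^r` with `r ≥_{e i} a i`. -/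
noncomputable def Jideal (A : Type*) [CommRing A] {d : ℕ} (a : Fin d → ℝ≥0∞)
    (e : Fin d → Bool) : Ideal (SemiRng A d) :=
  Ideal.span {f | ∃ (i : Fin d) (r : ℝ≥0), geq (e i) r (a i) ∧ f = mono A (Pi.single i r)}

/-- The ideal `I_{a,e}` generated by all monomials `X^r` with `r i ≥_{e i} a i` for all `i`. -/
noncomputable def Iideal (A : Type*) [CommRing A] {d : ℕ} (a : Fin d → ℝ≥0∞)
    (e : Fin d → Bool) : Ideal (SemiRng A d) :=
  Ideal.span {f | ∃ r : Fin d → ℝ≥0, (∀ i, geq (e i) (r i) (a i)) ∧ f = mono A r}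

/-- A monomial ideal is m-irreducible if whenever it is an intersection of two monomial
ideals, it equals one of them. -/
def MIrred {A : Type*} [CommRing A] {d : ℕ} (I : Ideal (SemiRng A d)) : Prop :=
  ∀ J K : Ideal (SemiRng A d), IsMonomialIdeal J → IsMonomialIdeal K →
    I = J ⊓ K → I = J ∨ I = K

variable {A : Type*} [CommRing A] [Nontrivial A] {d : ℕ}


section Aux

variable {A : Type*} [CommRing A] [Nontrivial A] {d : ℕ}

lemma geq_mono {e : Bool} {r s : ℝ≥0} {a : ℝ≥0∞} (h : geq e r a) (hrs : r ≤ s) :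
    geq e s a := by
  cases e <;> simp only [geq, if_true, if_false, Bool.false_eq_true] at *
  · exact h.trans (ENNReal.coe_le_coe.2 hrs)
  · exact h.trans_le (ENNReal.coe_le_coe.2 hrs)

lemma geq_of_lt {e : Bool} {r : ℝ≥0} {a : ℝ≥0∞} (h : a < r) : geq e r a := by
  cases e <;> simp only [geq, if_true, if_false, Bool.false_eq_true]
  · exact h.le
  · exact h

lemma le_of_geq {e : Bool} {r : ℝ≥0} {a : ℝ≥0∞} (h : geq e r a) : a ≤ r := by
  cases e <;> simp only [geq, if_true, if_false, Bool.false_eq_true] at h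
  · exact h
  · exact h.le

lemma not_geq_top {e : Bool} {r : ℝ≥0} : ¬ geq e r ⊤ := by
  intro h
  exact (lt_irrefl (⊤ : ℝ≥0∞)) ((le_of_geq h).trans_lt ENNReal.coe_lt_top)

lemma mono_eq_of' : mono A (d := d) = AddMonoidAlgebra.of' A (Fin d → ℝ≥0) := rfl

lemma mono_mul (u v : Fin d → ℝ≥0) : mono A u * mono A v = mono A (u + v) := by
  simp [mono, AddMonoidAlgebra.single_mul_single]

lemma single_le_pi {j : Fin d} {r : ℝ≥0} {w : Fin d → ℝ≥0} (h : r ≤ w j) :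
    Pi.single j r ≤ w := by
  intro l
  rcases eq_or_ne l j with rfl | hl
  · simpa using h
  · simp [Pi.single_eq_of_ne hl]

lemma mono_mem_of_le {I : Ideal (SemiRng A d)} {u w : Fin d → ℝ≥0} (h : mono A u ∈ I)
    (huw : u ≤ w) : mono A w ∈ I := by
  have : mono A w = mono A (w - u) * mono A u := by
    rw [mono_mul, tsub_add_cancel_of_le huw]
  rw [this]
  exact I.mul_mem_left _ h

lemma mono_mem_span_iff {E : Set (Fin d → ℝ≥0)} {w : Fin d → ℝ≥0} :
    mono A w ∈ Ideal.span (mono A '' E) ↔ ∃ u ∈ E, u ≤ w := by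
  rw [mono_eq_of', AddMonoidAlgebra.mem_ideal_span_of'_image]
  have hsupp : (AddMonoidAlgebra.of' A (Fin d → ℝ≥0) w).coeff.support = {w} :=
    Finsupp.support_single_ne_zero _ one_ne_zero
  constructor
  · intro h
    obtain ⟨u, hu, dd, hdd⟩ := h w (by rw [hsupp]; exact Finset.mem_singleton_self w)
    exact ⟨u, hu, by rw [hdd]; exact le_add_self⟩
  · rintro ⟨u, hu, huw⟩ m hm
    rw [hsupp, Finset.mem_singleton] at hm
    rw [hm]
    exact ⟨u, hu, w - u, (tsub_add_cancel_of_le huw).symm⟩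

lemma Jideal_eq_span_image (a : Fin d → ℝ≥0∞) (e : Fin d → Bool) :
    Jideal A a e =
      Ideal.span (mono A '' {u | ∃ (j : Fin d) (r : ℝ≥0), geq (e j) r (a j) ∧ u = Pi.single j r}) := by
  unfold Jideal
  congr 1
  ext f
  constructor
  · rintro ⟨j, r, h, rfl⟩
    exact ⟨Pi.single j r, ⟨j, r, h, rfl⟩, rfl⟩
  · rintro ⟨u, ⟨j, r, h, rfl⟩, rfl⟩
    exact ⟨j, r, h, rfl⟩

lemma mono_mem_Jideal {a : Fin d → ℝ≥0∞} {e : Fin d → Bool} {w : Fin d → ℝ≥0} :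
    mono A w ∈ Jideal A a e ↔ ∃ j, geq (e j) (w j) (a j) := by
  rw [Jideal_eq_span_image, mono_mem_span_iff]
  constructor
  · rintro ⟨u, ⟨j, r, hg, rfl⟩, hle⟩
    refine ⟨j, geq_mono hg ?_⟩
    have := hle j
    simpa using this
  · rintro ⟨j, hj⟩
    exact ⟨Pi.single j (w j), ⟨j, w j, hj, rfl⟩, single_le_pi le_rfl⟩

lemma mirred_Jideal (a : Fin d → ℝ≥0∞) (e : Fin d → Bool) : MIrred (Jideal A a e) := by
  rintro J K ⟨EJ, rfl⟩ ⟨EK, rfl⟩ hI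
  by_contra hcon
  push_neg at hcon
  obtain ⟨hJ, hK⟩ := hcon
  have hu : ∃ u ∈ EJ, mono A u ∉ Jideal A a e := by
    by_contra h
    push_neg at h
    refine hJ (le_antisymm (hI ▸ inf_le_left) (Ideal.span_le.2 ?_))
    rintro _ ⟨u, hu, rfl⟩
    exact h u hu
  have hv : ∃ v ∈ EK, mono A v ∉ Jideal A a e := by
    by_contra h
    push_neg at h
    refine hK (le_antisymm (hI ▸ inf_le_right) (Ideal.span_le.2 ?_))
    rintro _ ⟨v, hv, rfl⟩
    exact h v hv
  obtain ⟨u, huE, huI⟩ := hu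
  obtain ⟨v, hvE, hvI⟩ := hv
  have hw : mono A (u ⊔ v) ∈ Jideal A a e := by
    rw [hI]
    constructor
    · exact mono_mem_of_le (Ideal.subset_span ⟨u, huE, rfl⟩) le_sup_left
    · exact mono_mem_of_le (Ideal.subset_span ⟨v, hvE, rfl⟩) le_sup_right
  rw [mono_mem_Jideal] at hw
  obtain ⟨j, hj⟩ := hw
  have hwj : (u ⊔ v) j = u j ⊔ v j := rfl
  rcases le_total (u j) (v j) with h | h
  · rw [hwj, sup_eq_right.2 h] at hj
    exact hvI (mono_mem_of_le (Ideal.subset_span ⟨j, v j, hj, rfl⟩) (single_le_pi le_rfl))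
  · rw [hwj, sup_eq_left.2 h] at hj
    exact huI (mono_mem_of_le (Ideal.subset_span ⟨j, u j, hj, rfl⟩) (single_le_pi le_rfl))

end Aux

theorem stmt16 (k : ℕ) (hk : 1 ≤ k) (i : Fin k → Fin d)
    (α : Fin k → ℝ≥0∞) (ε : Fin k → Bool) :
    (∃ (β : Fin d → ℝ≥0∞) (δ : Fin d → Bool),
      (⨆ t, Jsingle A (i t) (α t) (ε t)) = Jideal A β δ) ∧
      MIrred (⨆ t, Jsingle A (i t) (α t) (ε t)) := by
  classical
  set F : Fin d → Finset (Fin k) := fun j => Finset.univ.filter (fun t => i t = j) with hF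
  set β : Fin d → ℝ≥0∞ := fun j => (F j).inf α with hβ
  set δ : Fin d → Bool := fun j => decide (∀ t ∈ F j, α t = β j → ε t = true) with hδ
  have key : ∀ (j : Fin d) (r : ℝ≥0),
      geq (δ j) r (β j) ↔ ∃ t, i t = j ∧ geq (ε t) r (α t) := by
    intro j r
    have hmem : ∀ t, t ∈ F j ↔ i t = j := by
      intro t; simp [hF]
    by_cases hne : (F j).Nonempty
    · have hmin : ∀ t ∈ F j, β j ≤ α t := fun t ht => Finset.inf_le ht
      obtain ⟨t0, ht0, ht0e⟩ := Finset.exists_mem_eq_inf (F j) hne α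
      rcases hδj : δ j with _ | _
      · rw [hδ] at hδj
        simp only [decide_eq_false_iff_not] at hδj
        push_neg at hδj
        obtain ⟨t1, ht1F, ht1a, ht1e⟩ := hδj
        replace ht1e : ε t1 = false := by simpa using ht1e
        constructor
        · intro h
          have hle : β j ≤ (r : ℝ≥0∞) := by
            simpa [geq] using h
          exact ⟨t1, (hmem t1).1 ht1F, by simp [geq, ht1e, ht1a, hle]⟩
        · rintro ⟨t, htj, hg⟩
          have : β j ≤ α t := hmin t ((hmem t).2 htj)
          have : β j ≤ (r : ℝ≥0∞) := this.trans (le_of_geq hg)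
          simpa [geq] using this
      · rw [hδ] at hδj
        simp only [decide_eq_true_eq] at hδj
        constructor
        · intro h
          have hlt : β j < (r : ℝ≥0∞) := by simpa [geq] using h
          refine ⟨t0, (hmem t0).1 ht0, geq_of_lt ?_⟩
          rw [← ht0e]; exact hlt
        · rintro ⟨t, htj, hg⟩
          have htF : t ∈ F j := (hmem t).2 htj
          have hr : β j < (r : ℝ≥0∞) := by
            rcases eq_or_ne (α t) (β j) with hα | hα
            · have := hδj t htF hα
              rw [this] at hg
              rw [← hα]
              simpa [geq] using hg
            · exact ((hmin t htF).lt_of_ne (Ne.symm hα)).trans_le (le_of_geq hg)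
          simpa [geq] using hr
    · have hβj : β j = ⊤ := by
        rw [hβ]
        simp [Finset.not_nonempty_iff_eq_empty.1 hne]
      constructor
      · intro h
        exact absurd (hβj ▸ h) not_geq_top
      · rintro ⟨t, htj, _⟩
        exact absurd ⟨t, (hmem t).2 htj⟩ hne
  have hsets : (⋃ t, {f : SemiRng A d | ∃ r : ℝ≥0, geq (ε t) r (α t) ∧ f = mono A (Pi.single (i t) r)})
      = {f | ∃ (j : Fin d) (r : ℝ≥0), geq (δ j) r (β j) ∧ f = mono A (Pi.single j r)} := by
    ext f
    simp only [Set.mem_iUnion, Set.mem_setOf_eq]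
    constructor
    · rintro ⟨t, r, h, rfl⟩
      exact ⟨i t, r, (key (i t) r).2 ⟨t, rfl, h⟩, rfl⟩
    · rintro ⟨j, r, h, rfl⟩
      obtain ⟨t, htj, ht⟩ := (key j r).1 h
      exact ⟨t, r, ht, by rw [htj]⟩
  have hmain : (⨆ t, Jsingle A (i t) (α t) (ε t)) = Jideal A β δ := by
    unfold Jsingle Jideal
    rw [← Ideal.span_iUnion, hsets]
  exact ⟨⟨β, δ, hmain⟩, by rw [hmain]; exact mirred_Jideal β δ⟩
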